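/- arXiv:1904.01708 — 7 statements merged into one kernel-verified Lean document; each statement's English description precedes it below -/
import Mathlib

section
/- Let $G$ be a finite group acting on a set $X$ such that every point of $X$ has stabilizer conjugate to a fixed subgroup $H \leq G$. Then the map sending the orbit of a point $x \in X^H$ to the formal sum $\sum_{gH \in G/H} g x$ induces a bijection between the quotient of $X^H$ by the action of the Weyl group $W_G(H) = N_G(H)/H$ and the set of $G$-fixed elements of the free abelian monoid on $X$ supported on a single $G$-orbit. -/
open MulAction


/-- If every point of `X` has stabilizer conjugate to `H`, then `x ↦ ∑_{gH ∈ G/H} g • x`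
induces a bijection between the quotient of `X^H` by the Weyl group `W_G(H) = N_G(H)/H`
and the `G`-fixed elements of the free abelian monoid on `X` supported on a single orbit
(the sums of single `G`-orbits). -/
theorem stmt2 {G X : Type*} [Group G] [Fintype G] [MulAction G X] (H : Subgroup G)
    (hX : ∀ x : X, ∃ g : G,
        MulAction.stabilizer G x = Subgroup.map (MulAut.conj g).toMonoidHom H) :
    ∃ φ : {x : X // ∀ h ∈ H, h • x = x} → (X →₀ ℕ),
      -- φ x is the formal sum ∑_{gH ∈ G/H} g • x : its coefficient at y is the
      -- number of cosets gH with g • x = y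
      (∀ (x : {x : X // ∀ h ∈ H, h • x = x}) (y : X),
          φ x y = Nat.card {g : G // g • (x : X) = y} / Nat.card H) ∧
      -- φ lands in the set of sums of single G-orbits (which are G-fixed)
      (∀ x : {x : X // ∀ h ∈ H, h • x = x}, ∃ x0 : X,
          (↑(φ x).support : Set X) = MulAction.orbit G x0 ∧
          ∀ y ∈ MulAction.orbit G x0, φ x y = 1) ∧
      -- φ is surjective onto that set
      (∀ f : X →₀ ℕ,
          (∃ x0 : X, (↑f.support : Set X) = MulAction.orbit G x0 ∧
            ∀ y ∈ MulAction.orbit G x0, f y = 1) →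
          ∃ x, φ x = f) ∧
      -- φ identifies exactly the W_G(H)-orbits on X^H
      (∀ x y : {x : X // ∀ h ∈ H, h • x = x},
          φ x = φ y ↔ ∃ n ∈ Subgroup.normalizer (H : Set G), n • (x : X) = (y : X)) := by
  classical
  -- card of each stabilizer equals card of H
  have hcard : ∀ x : X, Nat.card (stabilizer G x) = Nat.card H := by
    intro x
    obtain ⟨g, hg⟩ := hX x
    rw [hg]
    exact (Nat.card_congr
      (Subgroup.equivMapOfInjective H _ (MulAut.conj g).injective).toEquiv).symm
  -- for x fixed by H, stabilizer = H
  have hstab : ∀ x : X, (∀ h ∈ H, h • x = x) → stabilizer G x = H := by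
    intro x hx
    exact (Subgroup.eq_of_le_of_card_ge (K := stabilizer G x)
      (fun h hh => hx h hh) (le_of_eq (hcard x))).symm
  have horbfin : ∀ x : X, (orbit G x).Finite := fun x => Set.finite_range _
  set φ : {x : X // ∀ h ∈ H, h • x = x} → (X →₀ ℕ) :=
    fun x => Finsupp.indicator (horbfin (x : X)).toFinset (fun _ _ => 1) with hφ
  have hval : ∀ (x : {x : X // ∀ h ∈ H, h • x = x}) (y : X),
      φ x y = if y ∈ orbit G (x : X) then 1 else 0 := by
    intro x y
    rw [hφ, Finsupp.indicator_apply]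
    split_ifs with h1 h2 h2 <;> simp_all [Set.Finite.mem_toFinset]
  refine ⟨φ, ?_, ?_, ?_, ?_⟩
  · intro x y
    rw [hval]
    by_cases hy : y ∈ orbit G (x : X)
    · obtain ⟨g0, hg0⟩ := hy
      have : Nat.card {g : G // g • (x : X) = y} = Nat.card H := by
        rw [← hcard (x : X)]
        refine Nat.card_congr ⟨fun g => ⟨g0⁻¹ * g.1, ?_⟩, fun h => ⟨g0 * h.1, ?_⟩, ?_, ?_⟩
        · have := g.2
          simp only [mem_stabilizer_iff, mul_smul]
          rw [this, ← hg0, inv_smul_smul]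
        · have := h.2
          simp only [mem_stabilizer_iff] at this
          simp only [mul_smul, this, hg0]
        · intro g; ext; simp
        · intro h; ext; simp
      rw [if_pos ⟨g0, hg0⟩, this, Nat.div_self Nat.card_pos]
    · rw [if_neg hy]
      have : IsEmpty {g : G // g • (x : X) = y} := by
        constructor; rintro ⟨g, hg⟩; exact hy ⟨g, hg⟩
      rw [Nat.card_of_isEmpty, Nat.zero_div]
  · intro x
    refine ⟨(x : X), ?_, fun y hy => by rw [hval, if_pos hy]⟩
    ext y
    simp only [Finset.mem_coe, Finsupp.mem_support_iff, hval]
    split_ifs with h <;> simp [h]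
  · rintro f ⟨x0, hsupp, hone⟩
    obtain ⟨g, hg⟩ := hX x0
    have hx : ∀ h ∈ H, h • (g⁻¹ • x0) = g⁻¹ • x0 := by
      intro h hh
      have : h ∈ stabilizer G (g⁻¹ • x0) := by
        rw [stabilizer_smul_eq_stabilizer_map_conj, hg]
        refine ⟨g * h * g⁻¹, ⟨h, hh, rfl⟩, ?_⟩
        simp [MulAut.conj_apply, mul_assoc]
      exact this
    refine ⟨⟨g⁻¹ • x0, hx⟩, ?_⟩
    ext y
    rw [hval]
    have horb : orbit G (g⁻¹ • x0) = orbit G x0 := orbit_smul _ _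
    by_cases hy : y ∈ orbit G x0
    · rw [horb, if_pos hy, hone y hy]
    · rw [horb, if_neg hy]
      by_contra hne
      exact hy (hsupp ▸ (Finsupp.mem_support_iff.2 fun h0 => hne h0.symm : y ∈ f.support))
  · intro x y
    constructor
    · intro hxy
      have : (y : X) ∈ orbit G (x : X) := by
        have h1 := hval x (y : X)
        have h2 := hval y (y : X)
        rw [hxy] at h1
        rw [h2, if_pos (mem_orbit_self _)] at h1
        by_contra h
        rw [if_neg h] at h1
        exact one_ne_zero h1
      obtain ⟨n, hn⟩ := this
      refine ⟨n, ?_, hn⟩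
      have : stabilizer G (y : X) = (stabilizer G (x : X)).map (MulAut.conj n).toMonoidHom := by
        rw [← hn, stabilizer_smul_eq_stabilizer_map_conj]
      rw [hstab _ x.2, hstab _ y.2] at this
      rw [Subgroup.mem_normalizer_iff]
      intro h
      constructor
      · intro hh
        rw [this]
        exact ⟨h, hh, rfl⟩
      · intro hh
        rw [this] at hh
        obtain ⟨h', hh', he⟩ := hh
        have he' : n * h' * n⁻¹ = n * h * n⁻¹ := he
        have : h' = h := mul_left_cancel (mul_right_cancel he')
        exact this ▸ hh'
    · rintro ⟨n, _, hn⟩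
      ext z
      rw [hval, hval, ← hn, orbit_smul]
end

section
/- Let $G$ be a finite group, $\rho_G$ its real regular representation, and $\overline{\mathbb{R}^n}$ the reduced standard $(n-1)$-dimensional real representation of $\Sigma_n$ (the orthogonal complement of the diagonal in the permutation representation $\mathbb{R}^n$). Let $\Gamma \leq G \times \Sigma_n$ be a subgroup such that $\Gamma \cap (1 \times \Sigma_n)$ acts nontransitively on $\{1,\ldots,n\}$. Then the $\Gamma$-fixed subspace of $\rho_G \otimes \overline{\mathbb{R}^n}$ is nonzero. -/
/-- If `Γ ≤ G × Σ_n` has nontransitive intersection with `1 × Σ_n`, then the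
`Γ`-fixed subspace of `ρ_G ⊗ ℝ^n(reduced)` is nonzero.  Here `ρ_G ⊗ ℝ^n` is modeled
as functions `G × Fin n → ℝ`, the reduced part being those with all row sums zero,
with `(g,σ)` acting by `((g,σ) • f)(a,i) = f(g⁻¹a, σ⁻¹ i)`. -/
theorem stmt3 {G : Type*} [Group G] [Fintype G] (n : ℕ)
    (Γ : Subgroup (G × Equiv.Perm (Fin n)))
    (hΓ : ¬ ∀ i j : Fin n, ∃ σ : Equiv.Perm (Fin n), ((1 : G), σ) ∈ Γ ∧ σ i = j) :
    ∃ f : G × Fin n → ℝ, f ≠ 0 ∧ (∀ a : G, ∑ i : Fin n, f (a, i) = 0) ∧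
      ∀ q ∈ Γ, ∀ (a : G) (i : Fin n), f (q.1 * a, q.2 i) = f (a, i) := by
  classical
  push_neg at hΓ
  obtain ⟨i, j, hij⟩ := hΓ
  -- orbit membership predicate: (a,k) is in the Γ-orbit of (1, i0)
  set P : Fin n → G → Fin n → Prop :=
    fun i0 a k => ∃ q ∈ Γ, (q : G × Equiv.Perm (Fin n)).1 = a ∧ q.2 i0 = k with hPdef
  -- translation invariance of the orbit predicate
  have keyP : ∀ (i0 : Fin n) (q : G × Equiv.Perm (Fin n)), q ∈ Γ →
      ∀ (a : G) (k : Fin n), P i0 (q.1 * a) (q.2 k) ↔ P i0 a k := by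
    intro i0 q hq a k
    constructor
    · rintro ⟨r, hr, hr1, hr2⟩
      refine ⟨q⁻¹ * r, mul_mem (inv_mem hq) hr, ?_, ?_⟩
      · simp [Prod.fst_mul, hr1, mul_assoc]
      · have : (q⁻¹ * r).2 i0 = q.2⁻¹ (r.2 i0) := rfl
        rw [this, hr2]
        exact q.2.injective (by simp)
    · rintro ⟨r, hr, hr1, hr2⟩
      refine ⟨q * r, mul_mem hq hr, ?_, ?_⟩
      · simp [Prod.fst_mul, hr1]
      · have : (q * r).2 i0 = q.2 (r.2 i0) := rfl
        rw [this, hr2]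
  -- row counts
  set m : Fin n → G → ℕ :=
    fun i0 a => (Finset.univ.filter (fun k => P i0 a k)).card with hmdef
  -- row counts are translation invariant
  have keym : ∀ (i0 : Fin n) (q : G × Equiv.Perm (Fin n)), q ∈ Γ →
      ∀ (a : G), m i0 (q.1 * a) = m i0 a := by
    intro i0 q hq a
    apply Finset.card_bij' (fun k _ => q.2⁻¹ k) (fun k _ => q.2 k)
    · intro k hk
      simp only [Finset.mem_filter, Finset.mem_univ, true_and] at hk ⊢
      have := (keyP i0 q hq a (q.2⁻¹ k)).mp
      simpa using this (by simpa using hk)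
    · intro k hk
      simp only [Finset.mem_filter, Finset.mem_univ, true_and] at hk ⊢
      exact (keyP i0 q hq a k).mpr hk
    · intro k _; simp
    · intro k _; simp
  -- rows outside the projection of Γ are empty
  have hout : ∀ (i0 : Fin n) (a : G), (¬ ∃ σ, (a, σ) ∈ Γ) → m i0 a = 0 := by
    intro i0 a ha
    rw [hmdef]
    simp only [Finset.card_eq_zero, Finset.filter_eq_empty_iff]
    rintro k - ⟨q, hq, hq1, -⟩
    exact ha ⟨q.2, by subst hq1; exact hq⟩
  -- rows in the projection have the same count as row 1
  have hin : ∀ (i0 : Fin n) (a : G), (∃ σ, (a, σ) ∈ Γ) → m i0 a = m i0 1 := by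
    rintro i0 a ⟨σ, hσ⟩
    have := keym i0 (a, σ) hσ 1
    simpa using this
  -- the function
  refine ⟨fun p => (m j 1 : ℝ) * (if P i p.1 p.2 then 1 else 0)
      - (m i 1 : ℝ) * (if P j p.1 p.2 then 1 else 0), ?_, ?_, ?_⟩
  · -- nonzero: evaluate at (1, i)
    have h1 : P i 1 i := ⟨1, one_mem Γ, rfl, rfl⟩
    have h2 : ¬ P j 1 i := by
      rintro ⟨q, hq, hq1, hq2⟩
      have hq' : ((1 : G), q.2) ∈ Γ := by rw [← hq1]; exact hq
      have hinv : ((1 : G), q.2⁻¹) ∈ Γ := by simpa using inv_mem hq'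
      exact hij q.2⁻¹ hinv (by rw [← hq2]; simp)
    have hm2 : 0 < m j 1 := by
      rw [hmdef]
      exact Finset.card_pos.mpr ⟨j, Finset.mem_filter.mpr ⟨Finset.mem_univ _,
        ⟨1, one_mem Γ, rfl, rfl⟩⟩⟩
    intro hf
    have := congrFun hf (1, i)
    simp only [Pi.zero_apply] at this
    rw [if_pos h1, if_neg h2] at this
    simp at this
    omega
  · -- row sums vanish
    intro a
    have hsum : ∀ i0 : Fin n,
        ∑ k : Fin n, (if P i0 a k then (1:ℝ) else 0) = (m i0 a : ℝ) := by
      intro i0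
      rw [hmdef]
      rw [Finset.sum_boole]
    rw [Finset.sum_sub_distrib, ← Finset.mul_sum, ← Finset.mul_sum, hsum, hsum]
    by_cases ha : ∃ σ, (a, σ) ∈ Γ
    · rw [hin i a ha, hin j a ha]; ring
    · rw [hout i a ha, hout j a ha]; ring
  · -- invariance
    intro q hq a k
    simp only
    rw [if_congr (keyP i q hq a k) rfl rfl, if_congr (keyP j q hq a k) rfl rfl]
end

section
/- Let $p$ be a prime, $\sigma \in \Sigma_p$ a $p$-cycle, and $\Phi \leq \Sigma_p$ a nontrivial subgroup normalized by $\sigma$ (i.e., $\sigma \Phi \sigma^{-1} = \Phi$). Then $\Phi$ acts transitively on $\{1, \ldots, p\}$. -/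
/-- A nontrivial subgroup of `Σ_p` normalized by a `p`-cycle acts transitively. -/
theorem stmt8 {p : ℕ} (hp : p.Prime) (σ : Equiv.Perm (Fin p))
    (hσc : σ.IsCycle) (hσs : σ.support.card = p)
    (Φ : Subgroup (Equiv.Perm (Fin p))) (hΦ : Φ ≠ ⊥)
    (hnorm : Subgroup.map (MulAut.conj σ).toMonoidHom Φ = Φ) :
    ∀ i j : Fin p, ∃ τ ∈ Φ, τ i = j := by
  classical
  -- every point is in the support of σ
  have hsupp : σ.support = Finset.univ := by
    apply Finset.eq_univ_of_card
    simpa [Fintype.card_fin] using hσs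
  have hmove : ∀ a : Fin p, σ a ≠ a := fun a =>
    Equiv.Perm.mem_support.mp (hsupp ▸ Finset.mem_univ a)
  -- σ is in the normalizer of Φ
  set N := Subgroup.normalizer (Φ : Set (Equiv.Perm (Fin p))) with hN
  have hσN : σ ∈ N := by
    rw [Subgroup.mem_normalizer_iff]
    intro h
    constructor
    · intro hh
      have : σ * h * σ⁻¹ ∈ Subgroup.map (MulAut.conj σ).toMonoidHom Φ :=
        ⟨h, hh, by simp [MulAut.conj_apply]⟩
      rwa [hnorm] at this
    · intro hh
      rw [← hnorm] at hh
      obtain ⟨k, hk, hke⟩ := hh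
      simp only [MulEquiv.coe_toMonoidHom, MulAut.conj_apply] at hke
      have : k = h := by
        have := mul_right_cancel hke
        exact mul_left_cancel this
      rwa [← this]
  -- the action of N on Fin p is transitive, since powers of σ reach everything
  have htrans : MulAction.IsPretransitive N (Fin p) := by
    constructor
    intro a b
    have hab : σ.SameCycle a b := hσc.sameCycle (hmove a) (hmove b)
    obtain ⟨k, hk⟩ := hab
    exact ⟨⟨σ ^ k, Subgroup.zpow_mem _ hσN k⟩, hk⟩
  -- Φ (as a subgroup of N) is normal in N, so its orbits are blocks
  -- find a point moved by some element of Φ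
  obtain ⟨τ₀, hτ₀Φ, hτ₀⟩ : ∃ τ₀ ∈ Φ, τ₀ ≠ 1 := by
    by_contra h
    push_neg at h
    exact hΦ (Subgroup.eq_bot_iff_forall Φ |>.mpr h)
  obtain ⟨x, hx⟩ : ∃ x : Fin p, τ₀ x ≠ x := by
    by_contra h
    push_neg at h
    exact hτ₀ (Equiv.Perm.ext h)
  -- the orbit of x under Φ.subgroupOf N is a block
  set B := MulAction.orbit (Φ.subgroupOf N) x with hB
  have hblock : MulAction.IsBlock N B := MulAction.IsBlock.orbit_of_normal x
  have hxB : x ∈ B := MulAction.mem_orbit_self x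
  have hτ₀xB : τ₀ x ∈ B :=
    ⟨⟨⟨τ₀, Subgroup.le_normalizer hτ₀Φ⟩, hτ₀Φ⟩, rfl⟩
  have hdvd : B.ncard ∣ p := by
    have := hblock.ncard_dvd_card ⟨x, hxB⟩
    simpa [Nat.card_eq_fintype_card, Fintype.card_fin] using this
  have h2le : 2 ≤ B.ncard := by
    have hfin : B.Finite := Set.toFinite B
    have : ({x, τ₀ x} : Set (Fin p)) ⊆ B := by
      intro y hy
      rcases hy with rfl | rfl
      · exact hxB
      · exact hτ₀xB
    calc 2 = ({x, τ₀ x} : Set (Fin p)).ncard := by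
            rw [Set.ncard_pair (Ne.symm hx)]
      _ ≤ B.ncard := Set.ncard_le_ncard this hfin
  have hcard : B.ncard = p := by
    rcases (Nat.Prime.eq_one_or_self_of_dvd hp _ hdvd) with h1 | h1
    · omega
    · exact h1
  have hBuniv : B = Set.univ := by
    apply Set.eq_of_subset_of_ncard_le (Set.subset_univ B)
    rw [hcard, Set.ncard_univ, Nat.card_eq_fintype_card, Fintype.card_fin]
  -- now: the Φ-orbit of x is everything; transfer to arbitrary i j
  have key : ∀ y : Fin p, ∃ τ ∈ Φ, τ x = y := by
    intro y
    have : y ∈ B := hBuniv ▸ Set.mem_univ y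
    obtain ⟨⟨g, hg⟩, hgy⟩ := this
    exact ⟨(g : Equiv.Perm (Fin p)), hg, hgy⟩
  intro i j
  obtain ⟨τ₁, hτ₁, hτ₁x⟩ := key i
  obtain ⟨τ₂, hτ₂, hτ₂x⟩ := key j
  refine ⟨τ₂ * τ₁⁻¹, mul_mem hτ₂ (inv_mem hτ₁), ?_⟩
  simp [← hτ₁x, ← hτ₂x]
end

section
/- Let $G$ be a finite $p$-group and let $f, f' : G \to \Sigma_p$ be two distinct group homomorphisms. Then the subgroup of $G \times \Sigma_p$ generated by the graphs $\Gamma_f = \{(g, f(g)) : g \in G\}$ and $\Gamma_{f'} = \{(g, f'(g)) : g \in G\}$ intersects $1 \times \Sigma_p$ in a subgroup that acts transitively on $\{1, \ldots, p\}$. -/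
/-- If `f ≠ f' : G → Σ_p` are homomorphisms from a finite `p`-group, the subgroup of
`G × Σ_p` generated by their graphs intersects `1 × Σ_p` transitively. -/
theorem stmt9 {p : ℕ} [Fact p.Prime] {G : Type*} [Group G] [Finite G]
    (hG : IsPGroup p G) (f f' : G →* Equiv.Perm (Fin p)) (hff : f ≠ f') :
    ∀ i j : Fin p, ∃ σ : Equiv.Perm (Fin p),
      ((1 : G), σ) ∈ Subgroup.closure
        ((Set.range fun g : G => ((g, f g) : G × Equiv.Perm (Fin p))) ∪
         (Set.range fun g : G => ((g, f' g) : G × Equiv.Perm (Fin p)))) ∧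
      σ i = j := by
  classical
  have hp : p.Prime := Fact.out
  set S := ((Set.range fun g : G => ((g, f g) : G × Equiv.Perm (Fin p))) ∪
         (Set.range fun g : G => ((g, f' g) : G × Equiv.Perm (Fin p)))) with hS
  set C := Subgroup.closure S with hCdef
  set K : Subgroup (Equiv.Perm (Fin p)) :=
    C.comap (MonoidHom.inr G (Equiv.Perm (Fin p))) with hKdef
  have hmemK : ∀ σ : Equiv.Perm (Fin p), σ ∈ K ↔ ((1 : G), σ) ∈ C := fun σ => Iff.rfl
  have hA : ∀ g : G, ((g, f g) : G × Equiv.Perm (Fin p)) ∈ C := fun g =>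
    Subgroup.subset_closure (Or.inl ⟨g, rfl⟩)
  have hB : ∀ g : G, ((g, f' g) : G × Equiv.Perm (Fin p)) ∈ C := fun g =>
    Subgroup.subset_closure (Or.inr ⟨g, rfl⟩)
  have hK0 : ∀ g : G, (f g)⁻¹ * f' g ∈ K := by
    intro g
    have h1 := C.mul_mem (C.inv_mem (hA g)) (hB g)
    have h2 : ((g, f g) : G × Equiv.Perm (Fin p))⁻¹ * (g, f' g)
        = ((1 : G), (f g)⁻¹ * f' g) := by
      ext <;> simp
    rw [h2] at h1
    exact (hmemK _).mpr h1
  have hconj : ∀ g : G, ∀ σ ∈ K, (f g) * σ * (f g)⁻¹ ∈ K := by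
    intro g σ hσ
    have h1 := C.mul_mem (C.mul_mem (hA g) ((hmemK σ).mp hσ)) (C.inv_mem (hA g))
    have h2 : ((g, f g) : G × Equiv.Perm (Fin p)) * ((1 : G), σ) * ((g, f g) : G × Equiv.Perm (Fin p))⁻¹
        = ((1 : G), f g * σ * (f g)⁻¹) := by
      ext <;> simp
    rw [h2] at h1
    exact (hmemK _).mpr h1
  have hconj' : ∀ g : G, ∀ σ ∈ K, (f' g) * σ * (f' g)⁻¹ ∈ K := by
    intro g σ hσ
    have h1 := C.mul_mem (C.mul_mem (hB g) ((hmemK σ).mp hσ)) (C.inv_mem (hB g))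
    have h2 : ((g, f' g) : G × Equiv.Perm (Fin p)) * ((1 : G), σ) * ((g, f' g) : G × Equiv.Perm (Fin p))⁻¹
        = ((1 : G), f' g * σ * (f' g)⁻¹) := by
      ext <;> simp
    rw [h2] at h1
    exact (hmemK _).mpr h1
  have hnorm : ∀ g : G, f g ∈ (Subgroup.normalizer (K : Set (Equiv.Perm (Fin p)))) := by
    intro g
    rw [Subgroup.mem_normalizer_iff]
    intro h
    constructor
    · exact hconj g h
    · intro hh
      have h3 := hconj g⁻¹ _ hh
      have h4 : f g⁻¹ * (f g * h * (f g)⁻¹) * (f g⁻¹)⁻¹ = h := by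
        rw [map_inv]; group
      rwa [h4] at h3
  have hnorm' : ∀ g : G, f' g ∈ (Subgroup.normalizer (K : Set (Equiv.Perm (Fin p)))) := by
    intro g
    rw [Subgroup.mem_normalizer_iff]
    intro h
    constructor
    · exact hconj' g h
    · intro hh
      have h3 := hconj' g⁻¹ _ hh
      have h4 : f' g⁻¹ * (f' g * h * (f' g)⁻¹) * (f' g⁻¹)⁻¹ = h := by
        rw [map_inv]; group
      rwa [h4] at h3
  obtain ⟨g₀, hg₀⟩ : ∃ g : G, f g ≠ f' g := by
    by_contra h
    push_neg at h
    exact hff (MonoidHom.ext h)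
  set σ₀ := (f g₀)⁻¹ * f' g₀ with hσ₀def
  have hσ₀K : σ₀ ∈ K := hK0 g₀
  have hσ₀ne : σ₀ ≠ 1 := fun h => hg₀ (by rwa [hσ₀def, inv_mul_eq_one] at h)
  -- produce a nontrivial element of p-power order normalizing K
  obtain ⟨c, hcne, hcnorm, k, hck⟩ :
      ∃ c : Equiv.Perm (Fin p), c ≠ 1 ∧ c ∈ (Subgroup.normalizer (K : Set (Equiv.Perm (Fin p)))) ∧ ∃ k : ℕ, c ^ p ^ k = 1 := by
    by_cases h : f' g₀ = 1
    · have hfne : f g₀ ≠ 1 := by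
        intro h1; exact hg₀ (h1.trans h.symm)
      obtain ⟨k, hk⟩ := hG g₀
      exact ⟨f g₀, hfne, hnorm g₀, k, by rw [← map_pow, hk, map_one]⟩
    · obtain ⟨k, hk⟩ := hG g₀
      exact ⟨f' g₀, h, hnorm' g₀, k, by rw [← map_pow, hk, map_one]⟩
  obtain ⟨m, hmk, hmeq⟩ := (Nat.dvd_prime_pow hp).mp (orderOf_dvd_of_pow_eq_one hck)
  have hm0 : m ≠ 0 := by
    intro h
    rw [h, pow_zero, orderOf_eq_one_iff] at hmeq
    exact hcne hmeq
  have hm1 : m - 1 + 1 = m := Nat.succ_pred_eq_of_pos (Nat.pos_of_ne_zero hm0)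
  set c₁ := c ^ p ^ (m - 1) with hc₁def
  have hord1 : orderOf c₁ = p := by
    have hdiv : p ^ m / p ^ (m - 1) = p := by
      conv_lhs => rw [← hm1, pow_succ]
      exact Nat.mul_div_cancel_left _ (pow_pos hp.pos _)
    rw [hc₁def, orderOf_pow, hmeq,
      Nat.gcd_eq_right (pow_dvd_pow p (Nat.sub_le m 1)), hdiv]
  have hcyc : c₁.IsCycle := by
    apply Equiv.Perm.isCycle_of_prime_order''
    · rwa [Fintype.card_fin]
    · rw [hord1, Fintype.card_fin]
  have hmoves : ∀ x : Fin p, c₁ x ≠ x := by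
    have hsupp : c₁.support = Finset.univ := by
      apply Finset.eq_univ_of_card
      rw [← hcyc.orderOf, hord1, Fintype.card_fin]
    intro x
    rw [← Equiv.Perm.mem_support, hsupp]
    exact Finset.mem_univ x
  have hc₁norm : c₁ ∈ (Subgroup.normalizer (K : Set (Equiv.Perm (Fin p)))) := (Subgroup.normalizer (K : Set (Equiv.Perm (Fin p)))).pow_mem hcnorm _
  set L := K ⊔ Subgroup.zpowers c₁ with hLdef
  have hKL : K ≤ L := le_sup_left
  have hLnorm : L ≤ (Subgroup.normalizer (K : Set (Equiv.Perm (Fin p)))) :=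
    sup_le K.le_normalizer (Subgroup.zpowers_le.mpr hc₁norm)
  set N := K.subgroupOf L with hNdef
  haveI hNnormal : N.Normal := by
    constructor
    intro n hn ℓ
    rw [Subgroup.mem_subgroupOf] at hn ⊢
    have : ((ℓ * n * ℓ⁻¹ : L) : Equiv.Perm (Fin p)) = (ℓ : Equiv.Perm (Fin p)) * n * (ℓ : Equiv.Perm (Fin p))⁻¹ := rfl
    rw [this]
    exact (Subgroup.mem_normalizer_iff.mp (hLnorm ℓ.2) _).mp hn
  haveI htrans : MulAction.IsPretransitive L (Fin p) := by
    constructor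
    intro x y
    obtain ⟨n, hn⟩ := hcyc.exists_pow_eq (hmoves x) (hmoves y)
    exact ⟨⟨c₁ ^ n, Subgroup.mem_sup_right ((Subgroup.zpowers c₁).pow_mem (Subgroup.mem_zpowers c₁) n)⟩, hn⟩
  have horb_card : ∀ x : Fin p, (MulAction.orbit N x).ncard = 1 ∨ (MulAction.orbit N x).ncard = p := by
    intro x
    have hblock : MulAction.IsBlock L (MulAction.orbit N x) :=
      MulAction.IsBlock.orbit_of_normal x
    have hne : (MulAction.orbit N x).Nonempty := ⟨x, MulAction.mem_orbit_self x⟩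
    have hdvd := hblock.ncard_dvd_card hne
    rw [Nat.card_eq_fintype_card, Fintype.card_fin] at hdvd
    exact hp.eq_one_or_self_of_dvd _ hdvd
  have horb_univ : ∀ x : Fin p, (MulAction.orbit N x).ncard = p →
      MulAction.orbit N x = Set.univ := by
    intro x hx
    apply Set.eq_of_subset_of_ncard_le (Set.subset_univ _)
    rw [hx, Set.ncard_univ, Nat.card_eq_fintype_card, Fintype.card_fin]
  -- no orbit can be a singleton
  have horb_ne_one : ∀ x : Fin p, (MulAction.orbit N x).ncard ≠ 1 := by
    intro x hx
    -- then every orbit is a singleton, so σ₀ = 1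
    have hall : ∀ y : Fin p, (MulAction.orbit N y).ncard = 1 := by
      intro y
      rcases horb_card y with h1 | hpy
      · exact h1
      · exfalso
        have huniv := horb_univ y hpy
        have hxmem : x ∈ MulAction.orbit N y := huniv ▸ Set.mem_univ x
        have : MulAction.orbit N x = MulAction.orbit N y :=
          (MulAction.orbit_eq_iff.mpr hxmem)
        rw [this, hpy] at hx
        exact hp.one_lt.ne' hx
    have hfix : ∀ y : Fin p, σ₀ y = y := by
      intro y
      have hy := hall y
      obtain ⟨a, ha⟩ := Set.ncard_eq_one.mp hy
      have hymem : y ∈ MulAction.orbit N y := MulAction.mem_orbit_self y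
      rw [ha] at hymem
      have hya : y = a := hymem
      have hσ₀L : σ₀ ∈ L := hKL hσ₀K
      have hσ₀N : (⟨σ₀, hσ₀L⟩ : L) ∈ N := Subgroup.mem_subgroupOf.mpr hσ₀K
      have hmem : σ₀ y ∈ MulAction.orbit N y :=
        MulAction.mem_orbit y (⟨⟨σ₀, hσ₀L⟩, hσ₀N⟩ : N)
      rw [ha] at hmem
      have : σ₀ y = a := hmem
      rw [this, ← hya]
    exact hσ₀ne (Equiv.ext hfix)
  intro i j
  have hpcard : (MulAction.orbit N i).ncard = p :=
    (horb_card i).resolve_left (horb_ne_one i)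
  have huniv := horb_univ i hpcard
  have hjmem : j ∈ MulAction.orbit N i := huniv ▸ Set.mem_univ j
  obtain ⟨n, hn⟩ := hjmem
  refine ⟨((n : L) : Equiv.Perm (Fin p)), ?_, hn⟩
  exact (hmemK _).mp (Subgroup.mem_subgroupOf.mp n.2)
end

section
/- Let $p$ be prime and $\Psi \leq \Sigma_p$ a nontrivial subgroup that does not act transitively on $\{1,\ldots,p\}$. Then the order of the quotient $N_{\Sigma_p}(\Psi)/\Psi$ of the normalizer of $\Psi$ by $\Psi$ is not divisible by $p$. -/
/-- For a nontrivial nontransitive subgroup `Ψ ≤ Σ_p`, the order of `N(Ψ)/Ψ` is not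
divisible by `p`. -/
theorem stmt10 {p : ℕ} (hp : p.Prime) (Ψ : Subgroup (Equiv.Perm (Fin p)))
    (hΨ : Ψ ≠ ⊥) (hnt : ¬ ∀ i j : Fin p, ∃ σ ∈ Ψ, σ i = j) :
    ¬ p ∣ Nat.card (Subgroup.normalizer (Ψ : Set (Equiv.Perm (Fin p))) ⧸ Ψ.subgroupOf (Subgroup.normalizer (Ψ : Set (Equiv.Perm (Fin p))))) := by
  intro hdvd
  haveI : Fact p.Prime := ⟨hp⟩
  -- p divides the order of the normalizer
  have hN : p ∣ Nat.card (Subgroup.normalizer (Ψ : Set (Equiv.Perm (Fin p)))) := by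
    rw [Subgroup.card_eq_card_quotient_mul_card_subgroup (Ψ.subgroupOf (Subgroup.normalizer (Ψ : Set (Equiv.Perm (Fin p)))))]
    exact Dvd.dvd.mul_right hdvd _
  -- Cauchy: an element of order p in the normalizer
  obtain ⟨x, hx⟩ := exists_prime_orderOf_dvd_card' (G := (Subgroup.normalizer (Ψ : Set (Equiv.Perm (Fin p))))) p hN
  set σ : Equiv.Perm (Fin p) := (x : Equiv.Perm (Fin p)) with hσdef
  have hσmem : σ ∈ (Subgroup.normalizer (Ψ : Set (Equiv.Perm (Fin p)))) := x.2
  have hσord : orderOf σ = p :=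
    (orderOf_injective (Subgroup.normalizer (Ψ : Set (Equiv.Perm (Fin p)))).subtype (Subgroup.subtype_injective _) x).trans hx
  have hσp1 : σ ^ (p : ℤ) = 1 := by
    have h := pow_orderOf_eq_one σ
    rw [hσord] at h
    rw [zpow_natCast, h]
  -- σ is a p-cycle
  have hcyc : σ.IsCycle := by
    apply Equiv.Perm.isCycle_of_prime_order'' (by simpa using hp)
    simpa using hσord
  have hsupp : σ.support = Finset.univ := by
    apply Finset.eq_univ_of_card
    rw [← hcyc.orderOf, hσord]; simp
  have hmoves : ∀ a : Fin p, σ a ≠ a := by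
    intro a
    have : a ∈ σ.support := hsupp ▸ Finset.mem_univ a
    exact Equiv.Perm.mem_support.mp this
  -- everything is in the σ-orbit of any point
  have horbit : ∀ a b : Fin p, ∃ k : ℤ, (σ ^ k) a = b := fun a b =>
    hcyc.sameCycle (hmoves a) (hmoves b)
  -- conjugation by powers of σ preserves Ψ
  have hconj : ∀ (k : ℤ) (g : Equiv.Perm (Fin p)), g ∈ Ψ → σ ^ k * g * (σ ^ k)⁻¹ ∈ Ψ := by
    intro k g hg
    exact (Subgroup.mem_normalizer_iff.mp (Subgroup.zpow_mem (Subgroup.normalizer (Ψ : Set (Equiv.Perm (Fin p)))) hσmem k) g).mp hg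
  -- the nontrivial element
  obtain ⟨y, hyΨ, hy1⟩ : ∃ y ∈ Ψ, y ≠ 1 := by
    by_contra h
    push_neg at h
    exact hΨ ((Subgroup.eq_bot_iff_forall Ψ).mpr h)
  obtain ⟨a, ha⟩ : ∃ a : Fin p, y a ≠ a := by
    by_contra h
    push_neg at h
    exact hy1 (Equiv.ext h)
  -- the subgroup of exponents k with ∃ g ∈ Ψ, g a = σ^k a
  let K : AddSubgroup ℤ :=
    { carrier := {k : ℤ | ∃ g ∈ Ψ, g a = (σ ^ k) a}
      zero_mem' := ⟨1, one_mem Ψ, by simp⟩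
      add_mem' := by
        rintro k l ⟨g, hg, hga⟩ ⟨h, hh, hha⟩
        refine ⟨σ ^ k * h * (σ ^ k)⁻¹ * g, mul_mem (hconj k h hh) hg, ?_⟩
        simp only [Equiv.Perm.mul_apply, hga]
        have : ((σ ^ k)⁻¹) ((σ ^ k) a) = a := by simp
        rw [this, hha, zpow_add]
        simp [Equiv.Perm.mul_apply]
      neg_mem' := by
        rintro k ⟨g, hg, hga⟩
        refine ⟨(σ ^ (-k)) * g⁻¹ * (σ ^ (-k))⁻¹, hconj (-k) g⁻¹ (inv_mem hg), ?_⟩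
        simp only [Equiv.Perm.mul_apply]
        have h1 : ((σ ^ (-k))⁻¹) a = (σ ^ k) a := by
          rw [← zpow_neg]; simp
        rw [h1, ← hga]
        simp }
  have hpK : (p : ℤ) ∈ K := by
    refine ⟨1, one_mem Ψ, ?_⟩
    simp [hσp1]
  -- some element of K not divisible by p
  obtain ⟨m, hm⟩ := horbit a (y a)
  have hmK : m ∈ K := ⟨y, hyΨ, hm.symm⟩
  have hmnd : ¬ (p : ℤ) ∣ m := by
    intro ⟨c, hc⟩
    apply ha
    rw [← hm, hc, zpow_mul, hσp1]
    simp
  -- K is cyclic generated by some d with d ∣ p, hence d = ±1, hence K = ⊤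
  obtain ⟨d, hd⟩ := Int.subgroup_cyclic K
  have hdvdp : d ∣ (p : ℤ) := by
    have := hd ▸ hpK
    obtain ⟨n, hn⟩ := AddSubgroup.mem_closure_singleton.mp this
    exact ⟨n, by rw [← hn, smul_eq_mul]; ring⟩
  have hddm : d ∣ m := by
    have := hd ▸ hmK
    obtain ⟨n, hn⟩ := AddSubgroup.mem_closure_singleton.mp this
    exact ⟨n, by rw [← hn, smul_eq_mul]; ring⟩
  have hd1 : d.natAbs = 1 := by
    have h1 : d.natAbs ∣ p := by simpa using Int.natAbs_dvd_natAbs.mpr hdvdp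
    rcases (Nat.Prime.eq_one_or_self_of_dvd hp _ h1) with h | h
    · exact h
    · exfalso
      apply hmnd
      have h2 : ((d.natAbs : ℤ)) ∣ d := Int.natAbs_dvd.mpr dvd_rfl
      rw [h] at h2
      exact h2.trans hddm
  have hKtop : ∀ k : ℤ, k ∈ K := by
    intro k
    rw [hd]
    refine AddSubgroup.mem_closure_singleton.mpr ⟨k * d, ?_⟩
    rcases Int.natAbs_eq d with h | h <;> rw [hd1] at h <;> rw [h, smul_eq_mul] <;> push_cast <;> ring
  -- transitivity of Ψ: contradiction
  apply hnt
  intro i j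
  obtain ⟨ki, hki⟩ := horbit a i
  obtain ⟨kj, hkj⟩ := horbit a j
  obtain ⟨gi, hgi, hgia⟩ := hKtop ki
  obtain ⟨gj, hgj, hgja⟩ := hKtop kj
  refine ⟨gj * gi⁻¹, mul_mem hgj (inv_mem hgi), ?_⟩
  rw [← hki, ← hgia]
  simp only [Equiv.Perm.mul_apply]
  rw [← Equiv.Perm.mul_apply gi⁻¹ gi, inv_mul_cancel, Equiv.Perm.one_apply, hgja, hkj]
end

section
/- Let $G$ be a finite $p$-group, and let $X$ be a $(G \times \Sigma_p)$-set such that for every $x \in X$, the stabilizer $S_x \leq G \times \Sigma_p$ satisfies: $S_x \cap (1 \times \Sigma_p)$ is nontransitive as a subgroup of $\Sigma_p$. Then the $G$-fixed points of the quotient $X/\Sigma_p$ are in bijection with the quotient by the $\Sigma_p$-conjugation action of the disjoint union, over all homomorphisms $f : G \to \Sigma_p$, of the fixed-point sets $X^{\Gamma_f}$, where $\Gamma_f$ is the graph of $f$. Moreover, for distinct homomorphisms $f \neq f'$, the sets $X^{\Gamma_f}$ and $X^{\Gamma_{f'}}$ are disjoint. -/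
open Equiv

section Aux29517

variable {p : ℕ} [Fact p.Prime]

/-- A permutation of `Fin p` of order `p` is a `p`-cycle, hence "transitive". -/
private lemma cycle_trans29517 {c : Equiv.Perm (Fin p)} (hc : orderOf c = p) :
    ∀ i j : Fin p, ∃ k : ℕ, (c ^ k) i = j := by
  have hp : p.Prime := Fact.out
  have hcard : Fintype.card (Fin p) = p := Fintype.card_fin p
  have hcy : c.IsCycle :=
    Equiv.Perm.isCycle_of_prime_order'' (by rwa [hcard]) (by rw [hcard, hc])
  have hsupp : c.support = Finset.univ := by
    apply Finset.eq_univ_of_card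
    rw [← hcy.orderOf, hc, hcard]
  have hmove : ∀ i : Fin p, c i ≠ i := fun i =>
    Equiv.Perm.mem_support.mp (by simp [hsupp])
  intro i j
  exact hcy.exists_pow_eq (hmove i) (hmove j)

/-- From a nontrivial element of `p`-power order, extract a power of order exactly `p`. -/
private lemma exists_pow_order_p29517 {M : Type*} [Group M] {τ : M}
    (hτ : ∃ k : ℕ, τ ^ p ^ k = 1) (h1 : τ ≠ 1) :
    ∃ m : ℕ, orderOf (τ ^ m) = p := by
  have hp : p.Prime := Fact.out
  obtain ⟨k, hk⟩ := hτ
  have hdvd : orderOf τ ∣ p ^ k := orderOf_dvd_of_pow_eq_one hk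
  obtain ⟨j, _hj, hord⟩ := (Nat.dvd_prime_pow hp).mp hdvd
  have hj0 : j ≠ 0 := by
    rintro rfl
    exact h1 (orderOf_eq_one_iff.mp (by simpa using hord))
  refine ⟨p ^ (j - 1), ?_⟩
  rw [orderOf_pow' _ (pow_ne_zero _ hp.ne_zero), hord]
  have hdl : p ^ (j - 1) ∣ p ^ j := pow_dvd_pow p (Nat.sub_le j 1)
  rw [Nat.gcd_eq_right hdl]
  have hsplit : p ^ j = p ^ (j - 1) * p := by
    rw [← pow_succ]
    congr 1
    omega
  rw [hsplit, Nat.mul_div_cancel_left _ (pow_pos hp.pos _)]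

variable {G X : Type*} [Group G] [MulAction (G × Equiv.Perm (Fin p)) X]

private lemma pair_pow_smul29517 {g : G} {σ : Equiv.Perm (Fin p)} {x : X}
    (h : (g, σ) • x = x) (k : ℕ) : (g ^ k, σ ^ k) • x = x := by
  have hmem : (g, σ) ∈ MulAction.stabilizer (G × Equiv.Perm (Fin p)) x := h
  have := pow_mem hmem k
  rwa [show (g, σ) ^ k = (g ^ k, σ ^ k) from Prod.ext (Prod.pow_fst _ _) (Prod.pow_snd _ _)]
    at this

/-- No element of order `p` in `1 × Σ_p` can stabilize `x`. -/
private lemma no_order_p29517 (x : X)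
    (hstab : ¬ ∀ i j : Fin p, ∃ σ : Equiv.Perm (Fin p),
        ((1 : G), σ) • x = x ∧ σ i = j)
    {c : Equiv.Perm (Fin p)} (hc : orderOf c = p) (hcx : ((1 : G), c) • x = x) :
    False := by
  apply hstab
  intro i j
  obtain ⟨k, hk⟩ := cycle_trans29517 hc i j
  refine ⟨c ^ k, ?_, hk⟩
  have := pair_pow_smul29517 hcx k
  rwa [one_pow] at this

/-- The key combinatorial lemma: if some `(h, c)` with `orderOf c = p` stabilizes `x`,
and the stabilizer meets `1 × Σ_p` nontransitively, then it meets it trivially. -/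
private lemma K_trivial29517 (x : X)
    (hstab : ¬ ∀ i j : Fin p, ∃ σ : Equiv.Perm (Fin p),
        ((1 : G), σ) • x = x ∧ σ i = j)
    {h : G} {c : Equiv.Perm (Fin p)} (hc : orderOf c = p) (hcx : (h, c) • x = x) :
    ∀ σ : Equiv.Perm (Fin p), ((1 : G), σ) • x = x → σ = 1 := by
  have hp : p.Prime := Fact.out
  intro σ hσ
  by_contra hσ1
  obtain ⟨i0, hi0⟩ : ∃ i0 : Fin p, σ i0 ≠ i0 := by
    by_contra hall
    push_neg at hall
    exact hσ1 (Equiv.ext hall)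
  -- the relation "lie in the same orbit of K = Stab(x) ∩ (1 × Σ_p)"
  set R : Fin p → Fin p → Prop :=
    fun a b => ∃ τ : Equiv.Perm (Fin p), ((1 : G), τ) • x = x ∧ τ a = b with hR
  have Rrefl : ∀ a, R a a := fun a => ⟨1, by exact one_smul (G × Equiv.Perm (Fin p)) x, rfl⟩
  have Rsymm : ∀ {a b}, R a b → R b a := by
    rintro a b ⟨τ, hτ, rfl⟩
    refine ⟨τ⁻¹, ?_, by simp⟩
    have hmem : ((1 : G), τ) ∈ MulAction.stabilizer (G × Equiv.Perm (Fin p)) x := hτ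
    have := inv_mem hmem
    rwa [show ((1 : G), τ)⁻¹ = ((1 : G), τ⁻¹) from Prod.ext (by simp) rfl] at this
  have Rtrans : ∀ {a b d}, R a b → R b d → R a d := by
    rintro a b d ⟨τ, hτ, rfl⟩ ⟨τ', hτ', rfl⟩
    refine ⟨τ' * τ, ?_, rfl⟩
    have hmem : ((1 : G), τ) ∈ MulAction.stabilizer (G × Equiv.Perm (Fin p)) x := hτ
    have hmem' : ((1 : G), τ') ∈ MulAction.stabilizer (G × Equiv.Perm (Fin p)) x := hτ'
    have := mul_mem hmem' hmem
    rwa [show ((1 : G), τ') * ((1 : G), τ) = ((1 : G), τ' * τ) from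
      Prod.ext (by simp) rfl] at this
  have Rshift : ∀ (k : ℕ) {a b}, R a b → R ((c ^ k) a) ((c ^ k) b) := by
    rintro k a b ⟨τ, hτ, rfl⟩
    refine ⟨c ^ k * τ * (c ^ k)⁻¹, ?_, by simp⟩
    have hmemc : (h, c) ∈ MulAction.stabilizer (G × Equiv.Perm (Fin p)) x := hcx
    have hmemck := pow_mem hmemc k
    have hmemτ : ((1 : G), τ) ∈ MulAction.stabilizer (G × Equiv.Perm (Fin p)) x := hτ
    have := mul_mem (mul_mem hmemck hmemτ) (inv_mem hmemck)
    rwa [show (h, c) ^ k * ((1 : G), τ) * ((h, c) ^ k)⁻¹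
        = (1, c ^ k * τ * (c ^ k)⁻¹) from by
      rw [show (h, c) ^ k = (h ^ k, c ^ k) from
        Prod.ext (Prod.pow_fst _ _) (Prod.pow_snd _ _)]
      exact Prod.ext (by simp) rfl] at this
  by_cases hT : ∃ m : ℕ, ¬ p ∣ m ∧ R i0 ((c ^ m) i0)
  · -- then K is transitive : contradiction
    obtain ⟨m, hm, hRm⟩ := hT
    have Rt : ∀ t : ℕ, R i0 ((c ^ (t * m)) i0) := by
      intro t
      induction t with
      | zero => simpa using Rrefl i0
      | succ t ih =>
        have := Rshift (t * m) hRm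
        rw [← Equiv.Perm.mul_apply, ← pow_add] at this
        have := Rtrans ih this
        rwa [show t * m + m = (t + 1) * m by ring] at this
    have Rall : ∀ n : ℕ, R i0 ((c ^ n) i0) := by
      intro n
      haveI : NeZero p := ⟨hp.ne_zero⟩
      have hm0 : (m : ZMod p) ≠ 0 := fun hzero =>
        hm ((ZMod.natCast_eq_zero_iff m p).mp hzero)
      set t : ℕ := ((n : ZMod p) * (m : ZMod p)⁻¹).val with ht
      have hcast : ((t * m : ℕ) : ZMod p) = (n : ZMod p) := by
        push_cast
        rw [ht]
        rw [ZMod.natCast_val, ZMod.cast_id]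
        rw [mul_assoc, inv_mul_cancel₀ hm0, mul_one]
      have hmod : (t * m) % p = n % p := (ZMod.natCast_eq_natCast_iff' _ _ _).mp hcast
      have hcc : c ^ (t * m) = c ^ n := by
        rw [pow_inj_mod, hc]
        exact hmod
      have := Rt t
      rwa [hcc] at this
    apply hstab
    intro i j
    obtain ⟨a, ha⟩ := cycle_trans29517 hc i0 i
    obtain ⟨b, hb⟩ := cycle_trans29517 hc i0 j
    have hRi : R i0 i := ha ▸ Rall a
    have hRj : R i0 j := hb ▸ Rall b
    obtain ⟨τ, hτ, hτij⟩ := Rtrans (Rsymm hRi) hRj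
    exact ⟨τ, hτ, hτij⟩
  · -- otherwise the orbit of i0 has ≥ 2 elements and its c-translates are disjoint:
    -- 2p ≤ p, contradiction
    push_neg at hT
    set u : Bool → Fin p := fun b => if b then σ i0 else i0 with hu
    have Ru : ∀ b, R i0 (u b) := by
      intro b
      cases b
      · simpa [hu] using Rrefl i0
      · exact ⟨σ, hσ, rfl⟩
    have key : ∀ (k l : Fin p) (b b' : Bool), (k : ℕ) ≤ (l : ℕ) →
        (c ^ (k : ℕ)) (u b) = (c ^ (l : ℕ)) (u b') → k = l ∧ b = b' := by
      intro k l b b' hkl heq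
      have hdec : (c ^ ((l : ℕ) - (k : ℕ))) (u b') = u b := by
        have : (c ^ (k : ℕ)) ((c ^ ((l : ℕ) - (k : ℕ))) (u b')) = (c ^ (k : ℕ)) (u b) := by
          rw [← Equiv.Perm.mul_apply, ← pow_add, Nat.add_sub_cancel' hkl, heq]
        exact (c ^ (k : ℕ)).injective this
      have hkeq : k = l := by
        by_contra hne
        have hdpos : 0 < (l : ℕ) - (k : ℕ) := by
          have : (k : ℕ) ≠ (l : ℕ) := fun hh => hne (Fin.ext hh)
          omega
        have hdlt : (l : ℕ) - (k : ℕ) < p := lt_of_le_of_lt (Nat.sub_le _ _) l.isLt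
        have hnd : ¬ p ∣ ((l : ℕ) - (k : ℕ)) := Nat.not_dvd_of_pos_of_lt hdpos hdlt
        apply hT _ hnd
        -- R i0 (c^d i0) : i0 R (u b) = c^d (u b') , c^d (u b') R c^d i0
        have h1 : R i0 (u b) := Ru b
        have h2 : R ((c ^ ((l : ℕ) - (k : ℕ))) (u b')) ((c ^ ((l : ℕ) - (k : ℕ))) i0) :=
          Rshift _ (Rsymm (Ru b'))
        rw [hdec] at h2
        exact Rtrans h1 h2
      refine ⟨hkeq, ?_⟩
      subst hkeq
      have : u b = u b' := (c ^ (k : ℕ)).injective heq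
      cases b <;> cases b' <;> simp only [hu, Bool.false_eq_true, Bool.true_eq_false, ↓reduceIte] at this ⊢
      · exact hi0 this.symm
      · exact hi0 this
    have hinj : Function.Injective
        (fun q : Fin p × Bool => (c ^ ((q.1 : ℕ))) (u q.2)) := by
      rintro ⟨k, b⟩ ⟨l, b'⟩ heq
      simp only at heq
      rcases le_total (k : ℕ) (l : ℕ) with hkl | hlk
      · obtain ⟨h1, h2⟩ := key k l b b' hkl heq
        rw [h1, h2]
      · obtain ⟨h1, h2⟩ := key l k b' b hlk heq.symm
        rw [h1, h2]
    have hcard := Fintype.card_le_of_injective _ hinj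
    simp [Fintype.card_prod] at hcard
    omega

end Aux29517

/-- For a finite `p`-group `G` and a `(G × Σ_p)`-set `X` all of whose stabilizers meet
`1 × Σ_p` nontransitively, the `G`-fixed points of `X/Σ_p` are exactly the `Σ_p`-orbits
of points fixed by the graph of some homomorphism `f : G → Σ_p`; the fixed sets
`X^{Γ_f}` for distinct `f` are disjoint, and `σ ∈ Σ_p` carries `X^{Γ_f}` to
`X^{Γ_{σfσ⁻¹}}`.  (Together these give the stated bijection.) -/
theorem stmt11 {p : ℕ} [Fact p.Prime] {G X : Type*} [Group G] [Finite G]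
    (hG : IsPGroup p G) [MulAction (G × Equiv.Perm (Fin p)) X]
    (hstab : ∀ x : X, ¬ ∀ i j : Fin p, ∃ σ : Equiv.Perm (Fin p),
        ((1 : G), σ) • x = x ∧ σ i = j) :
    -- a Σ_p-orbit is G-fixed in X/Σ_p iff it meets some graph fixed-point set
    (∀ x : X, (∀ g : G, ∃ σ : Equiv.Perm (Fin p), (g, σ) • x = x) ↔
        ∃ f : G →* Equiv.Perm (Fin p), ∀ g : G, (g, f g) • x = x) ∧
    -- disjointness of the graph fixed-point sets
    (∀ f f' : G →* Equiv.Perm (Fin p), f ≠ f' → ∀ x : X,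
        (∀ g : G, (g, f g) • x = x) → ¬ ∀ g : G, (g, f' g) • x = x) ∧
    -- σ carries X^{Γ_f} to X^{Γ_{σfσ⁻¹}}
    (∀ (σ : Equiv.Perm (Fin p)) (f : G →* Equiv.Perm (Fin p)) (x : X),
        (∀ g : G, (g, f g) • x = x) →
        ∀ g : G, (g, σ * f g * σ⁻¹) • (((1 : G), σ) • x) = ((1 : G), σ) • x) := by
  have hp : p.Prime := Fact.out
  refine ⟨?_, ?_, ?_⟩
  · -- part 1
    intro x
    constructor
    · intro h
      set S : Subgroup (G × Equiv.Perm (Fin p)) :=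
        MulAction.stabilizer (G × Equiv.Perm (Fin p)) x with hS
      let π : S →* G := (MonoidHom.fst G (Equiv.Perm (Fin p))).comp S.subtype
      have hπ : Function.Surjective π := by
        intro g
        obtain ⟨σ, hσ⟩ := h g
        exact ⟨⟨(g, σ), hσ⟩, rfl⟩
      obtain ⟨P⟩ : Nonempty (Sylow p S) := inferInstance
      -- the image of P under π is all of G
      have hmap : (P : Subgroup S).map π = ⊤ := by
        have hmapdvd : ((P : Subgroup S).map π).index ∣ (P : Subgroup S).index :=
          Subgroup.index_map_dvd _ hπ
        have hnd : ¬ p ∣ ((P : Subgroup S).map π).index :=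
          fun hd => P.not_dvd_index (hd.trans hmapdvd)
        obtain ⟨n, hn⟩ := hG.index ((P : Subgroup S).map π)
        have hn0 : n = 0 := by
          by_contra hn0
          exact hnd (hn ▸ dvd_pow_self p hn0)
        rw [hn0, pow_zero] at hn
        exact Subgroup.index_eq_one.mp hn
      -- restrict π to P; it is bijective
      set πP : ↥(P : Subgroup S) →* G := π.comp (P : Subgroup S).subtype with hπP
      have hπPsurj : Function.Surjective πP := by
        intro g
        have hg : g ∈ (P : Subgroup S).map π := hmap ▸ Subgroup.mem_top g
        obtain ⟨y, hy, hyg⟩ := hg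
        exact ⟨⟨y, hy⟩, hyg⟩
      have hπPinj : Function.Injective πP := by
        refine (injective_iff_map_eq_one πP).mpr ?_
        intro y hy
        by_contra hy1
        set z : G × Equiv.Perm (Fin p) := ((y : S) : G × Equiv.Perm (Fin p)) with hz
        have hz1 : z.1 = 1 := hy
        have hzS : z • x = x := (y : S).2
        have hσ1 : z.2 ≠ 1 := by
          intro h2
          exact hy1 (Subtype.ext (Subtype.ext (Prod.ext hz1 h2)))
        obtain ⟨k, hk⟩ := P.2 y
        have hzk : z ^ p ^ k = 1 := by
          have := congrArg (fun w : ↥(P : Subgroup S) =>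
            ((w : S) : G × Equiv.Perm (Fin p))) hk
          simpa using this
        have hz2k : z.2 ^ p ^ k = 1 := by
          rw [← Prod.pow_snd, hzk, Prod.snd_one]
        obtain ⟨m, hm⟩ := exists_pow_order_p29517 (p := p) ⟨k, hz2k⟩ hσ1
        have hz' : (z.1, z.2) • x = x := by
          rw [Prod.mk.eta]; exact hzS
        have hzm := pair_pow_smul29517 hz' m
        rw [hz1, one_pow] at hzm
        exact no_order_p29517 x (hstab x) hm hzm
      set e : ↥(P : Subgroup S) ≃* G := MulEquiv.ofBijective πP ⟨hπPinj, hπPsurj⟩ with he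
      refine ⟨(MonoidHom.snd G (Equiv.Perm (Fin p))).comp
        (S.subtype.comp (((P : Subgroup S).subtype).comp e.symm.toMonoidHom)), ?_⟩
      intro g
      set y : ↥(P : Subgroup S) := e.symm g with hy
      have hfst : (((y : S) : G × Equiv.Perm (Fin p))).1 = g := by
        have : πP y = g := by
          have := e.apply_symm_apply g
          rw [← hy] at this
          exact this
        exact this
      have hmemy : ((y : S) : G × Equiv.Perm (Fin p)) • x = x := (y : S).2
      have hpair : ((y : S) : G × Equiv.Perm (Fin p))
          = (g, (((y : S) : G × Equiv.Perm (Fin p))).2) := Prod.ext hfst rfl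
      rw [hpair] at hmemy
      exact hmemy
    · rintro ⟨f, hf⟩ g
      exact ⟨f g, hf g⟩
  · -- part 2 : disjointness
    intro f f' hne x hx hx'
    apply hne
    -- reduce to: ∀ g, f g = f' g
    suffices hfg : ∀ g, f g = f' g by
      ext g i
      rw [hfg]
    -- if both trivial, done; otherwise get K = 1 and conclude
    by_cases htriv : (∀ g : G, f g = 1) ∧ (∀ g : G, f' g = 1)
    · intro g; rw [htriv.1 g, htriv.2 g]
    · have hKbot : ∀ σ : Equiv.Perm (Fin p), ((1 : G), σ) • x = x → σ = 1 := by
        -- get some g1 and nontrivial value in one of the images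
        have : (∃ g1, f g1 ≠ 1) ∨ (∃ g1, f' g1 ≠ 1) := by
          by_contra hc
          push_neg at hc
          exact htriv ⟨hc.1, hc.2⟩
        rcases this with ⟨g1, hg1⟩ | ⟨g1, hg1⟩
        · obtain ⟨m, hm⟩ := exists_pow_order_p29517 (p := p)
            (⟨(hG g1).choose, by rw [← map_pow, (hG g1).choose_spec, map_one]⟩) hg1
          exact K_trivial29517 x (hstab x) hm (pair_pow_smul29517 (hx g1) m)
        · obtain ⟨m, hm⟩ := exists_pow_order_p29517 (p := p)
            (⟨(hG g1).choose, by rw [← map_pow, (hG g1).choose_spec, map_one]⟩) hg1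
          exact K_trivial29517 x (hstab x) hm (pair_pow_smul29517 (hx' g1) m)
      intro g
      have hmemf : (g, f g) ∈ MulAction.stabilizer (G × Equiv.Perm (Fin p)) x := hx g
      have hmemf' : (g, f' g) ∈ MulAction.stabilizer (G × Equiv.Perm (Fin p)) x := hx' g
      have hmul := mul_mem (inv_mem hmemf) hmemf'
      have hcalc : (g, f g)⁻¹ * (g, f' g) = ((1 : G), (f g)⁻¹ * f' g) :=
        Prod.ext (by simp) rfl
      rw [hcalc] at hmul
      have := hKbot _ hmul
      rw [inv_mul_eq_one] at this
      exact this.symm ▸ rfl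
  · -- part 3 : σ carries X^{Γ_f} to X^{Γ_{σfσ⁻¹}}
    intro σ f x hx g
    have hcomm : ((g, σ * f g * σ⁻¹) : G × Equiv.Perm (Fin p)) * ((1 : G), σ)
        = ((1 : G), σ) * (g, f g) := Prod.ext (by simp) (by simp [mul_assoc])
    rw [smul_smul, hcomm, ← smul_smul, hx g]
end

section
/- Let $p$ be prime, $n \geq s \geq 0$, and let $\mathcal{T}(V)$ be the set of $n \times r$ matrices over $\mathbb{F}_p$ with nullspace a fixed subspace $V \subseteq \mathbb{F}_p^r$ of dimension $r-s$, whose nonzero rows are linearly independent. Let $\Upsilon \subseteq \mathcal{T}(V)$ consist of those matrices whose last $s$ rows are nonzero (equivalently, whose first $n-s$ rows are zero). Then for $A \in \mathcal{T}(V)$ and $b \in B_n$ an invertible upper triangular $n \times n$ matrix over $\mathbb{F}_p$: $bA \in \Upsilon$ if and only if $A \in \Upsilon$ and $b$ lies in the block subgroup $B_{n-s} \times B_s$ of upper triangular matrices whose entries $b_{ij}$ vanish for $1 \leq i \leq n-s < j \leq n$. -/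
section Aux

variable {p n r s : ℕ} [Fact p.Prime]

open Classical

private lemma mulRow (b : Matrix (Fin n) (Fin n) (ZMod p))
    (A : Matrix (Fin n) (Fin r) (ZMod p)) (i : Fin n) :
    (b * A) i = ∑ j, b i j • A j := by
  ext k
  simp [Matrix.mul_apply, Finset.sum_apply]

private lemma keycomb {M : Matrix (Fin n) (Fin r) (ZMod p)}
    (hind : LinearIndependent (ZMod p)
      (fun i : {i : Fin n // M i ≠ 0} => (M i : Fin r → ZMod p)))
    (c : Fin n → ZMod p) (h : ∑ j, c j • M j = 0) :
    ∀ j, M j ≠ 0 → c j = 0 := by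
  have h1 : ∑ j ∈ Finset.univ.filter (fun j => M j ≠ 0), c j • M j = 0 := by
    rw [Finset.sum_filter_of_ne (fun x _ hx => ?_)]
    · exact h
    · intro hMx
      exact hx (by rw [hMx, smul_zero])
  rw [Finset.sum_subtype (p := fun j => M j ≠ 0) (Finset.univ.filter fun j => M j ≠ 0) (by simp) (fun j => c j • M j)] at h1
  intro j hj
  exact Fintype.linearIndependent_iff.mp hind (fun j => c j.1) h1 ⟨j, hj⟩

private lemma cardNonzero (hsr : s ≤ r) {V : Submodule (ZMod p) (Fin r → ZMod p)}
    (hV : Module.finrank (ZMod p) V = r - s)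
    {M : Matrix (Fin n) (Fin r) (ZMod p)}
    (hker : LinearMap.ker M.mulVecLin = V)
    (hind : LinearIndependent (ZMod p)
      (fun i : {i : Fin n // M i ≠ 0} => (M i : Fin r → ZMod p))) :
    Fintype.card {i : Fin n // M i ≠ 0} = s := by
  have hrank : M.rank = s := by
    have h1 := LinearMap.finrank_range_add_finrank_ker M.mulVecLin
    rw [hker, hV, Module.finrank_pi, Fintype.card_fin] at h1
    have : M.rank = Module.finrank (ZMod p) (LinearMap.range M.mulVecLin) := rfl
    omega
  have hspan : Submodule.span (ZMod p)
      (Set.range (fun i : {i : Fin n // M i ≠ 0} => (M i : Fin r → ZMod p)))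
      = Submodule.span (ZMod p) (Set.range M) := by
    apply le_antisymm
    · apply Submodule.span_mono
      rintro x ⟨i, rfl⟩
      exact ⟨i.1, rfl⟩
    · rw [Submodule.span_le]
      rintro x ⟨i, rfl⟩
      by_cases h : M i = 0
      · rw [h]; exact Submodule.zero_mem _
      · exact Submodule.subset_span ⟨⟨i, h⟩, rfl⟩
  have h2 := finrank_span_eq_card hind
  rw [hspan, show Set.range M = Set.range M.row from rfl, ← Matrix.rank_eq_finrank_span_row, hrank] at h2
  exact h2.symm

private lemma cardGe (k : ℕ) (hk : k ≤ n) :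
    Fintype.card {i : Fin n // k ≤ (i : ℕ)} = n - k := by
  have e : {i : Fin n // k ≤ (i : ℕ)} ≃ Fin (n - k) :=
    { toFun := fun i => ⟨i.1.val - k, by have h1 := i.1.isLt; have h2 := i.2; omega⟩
      invFun := fun j => ⟨⟨k + j.val, by have := j.isLt; omega⟩, by simp⟩
      left_inv := by
        rintro ⟨⟨v, hv⟩, h⟩
        apply Subtype.ext
        apply Fin.ext
        simp only [Fin.val_mk] at h ⊢
        omega
      right_inv := by
        rintro ⟨v, hv⟩
        apply Fin.ext
        simp }
  rw [Fintype.card_congr e, Fintype.card_fin]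

private lemma zeroOfLt (hsn : s ≤ n) {M : Matrix (Fin n) (Fin r) (ZMod p)}
    (hcard : Fintype.card {i : Fin n // M i ≠ 0} = s)
    (hnz : ∀ i : Fin n, n - s ≤ (i : ℕ) → M i ≠ 0) :
    ∀ i : Fin n, (i : ℕ) < n - s → M i = 0 := by
  have hS : (Finset.univ.filter (fun i : Fin n => n - s ≤ (i : ℕ))).card = s := by
    have := cardGe (n := n) (n - s) (by omega)
    rw [Fintype.card_subtype] at this
    omega
  have hT : (Finset.univ.filter (fun i : Fin n => M i ≠ 0)).card = s := by
    rw [← Fintype.card_subtype]; exact hcard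
  have hsub : (Finset.univ.filter (fun i : Fin n => n - s ≤ (i : ℕ)))
      ⊆ (Finset.univ.filter (fun i : Fin n => M i ≠ 0)) := by
    intro i hi
    simp only [Finset.mem_filter, Finset.mem_univ, true_and] at hi ⊢
    exact hnz i hi
  have heq := Finset.eq_of_subset_of_card_le hsub (by omega)
  intro i hi
  by_contra hne
  have : i ∈ Finset.univ.filter (fun i : Fin n => M i ≠ 0) := by
    simp [hne]
  rw [← heq] at this
  simp only [Finset.mem_filter, Finset.mem_univ, true_and] at this
  omega

private lemma diagNe {b : Matrix (Fin n) (Fin n) (ZMod p)} (hbU : IsUnit b)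
    (hbT : b.BlockTriangular id) : ∀ i, b i i ≠ 0 := by
  have hdet : b.det ≠ 0 := by
    exact ((Matrix.isUnit_iff_isUnit_det _).mp hbU).ne_zero
  rw [Matrix.det_of_upperTriangular hbT] at hdet
  intro i hi
  exact hdet (Finset.prod_eq_zero (Finset.mem_univ i) hi)

private lemma rowNeZero {bb : Matrix (Fin n) (Fin n) (ZMod p)}
    {M : Matrix (Fin n) (Fin r) (ZMod p)}
    (hdiag : ∀ i, bb i i ≠ 0)
    (hind : LinearIndependent (ZMod p)
      (fun i : {i : Fin n // M i ≠ 0} => (M i : Fin r → ZMod p)))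
    (i : Fin n) (hMi : M i ≠ 0) : (bb * M) i ≠ 0 := by
  intro h0
  rw [mulRow] at h0
  exact hdiag i (keycomb hind (fun j => bb i j) h0 i hMi)

end Aux

/-- Let `A ∈ 𝒯(V)` (nullspace `V` of dimension `r-s`, nonzero rows linearly independent)
and let `b` be an invertible upper triangular `n × n` matrix.  Then `bA ∈ Υ` (the
matrices of `𝒯(V)` whose last `s` rows are nonzero) iff `A ∈ Υ` and `b` lies in the
block subgroup `B_{n-s} × B_s`. -/
theorem stmt18 {p n r s : ℕ} [Fact p.Prime] (hsn : s ≤ n) (hsr : s ≤ r)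
    (V : Submodule (ZMod p) (Fin r → ZMod p))
    (hV : Module.finrank (ZMod p) V = r - s)
    (A : Matrix (Fin n) (Fin r) (ZMod p))
    (hAker : LinearMap.ker A.mulVecLin = V)
    (hAind : LinearIndependent (ZMod p)
      (fun i : {i : Fin n // A i ≠ 0} => (A i : Fin r → ZMod p)))
    (b : Matrix (Fin n) (Fin n) (ZMod p)) (hbU : IsUnit b)
    (hbT : b.BlockTriangular id) :
    (LinearMap.ker (b * A).mulVecLin = V ∧
      LinearIndependent (ZMod p)
        (fun i : {i : Fin n // (b * A) i ≠ 0} => ((b * A) i : Fin r → ZMod p)) ∧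
      (∀ i : Fin n, n - s ≤ (i : ℕ) → (b * A) i ≠ 0))
    ↔ ((∀ i : Fin n, n - s ≤ (i : ℕ) → A i ≠ 0) ∧
        (∀ i j : Fin n, (i : ℕ) < n - s → n - s ≤ (j : ℕ) → b i j = 0)) := by
  classical
  have hdet : IsUnit b.det := (Matrix.isUnit_iff_isUnit_det b).mp hbU
  haveI : Invertible b := b.invertibleOfIsUnitDet hdet
  have hbinv_mul : b⁻¹ * b = 1 := Matrix.nonsing_inv_mul b hdet
  have hmul_binv : b * b⁻¹ = 1 := Matrix.mul_nonsing_inv b hdet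
  have hAcard : Fintype.card {i : Fin n // A i ≠ 0} = s := cardNonzero hsr hV hAker hAind
  constructor
  · rintro ⟨hker', hind', hnz'⟩
    have hBAcard : Fintype.card {i : Fin n // (b * A) i ≠ 0} = s :=
      by convert cardNonzero hsr hV hker' hind'
    have hBAzero : ∀ i : Fin n, (i : ℕ) < n - s → (b * A) i = 0 :=
      zeroOfLt hsn (by convert hBAcard) hnz'
    -- A's last s rows are nonzero, via b⁻¹
    have hbiT : Matrix.BlockTriangular b⁻¹ id :=
      Matrix.blockTriangular_inv_of_blockTriangular hbT
    have hbiU : IsUnit b⁻¹ := ⟨⟨b⁻¹, b, hbinv_mul, hmul_binv⟩, rfl⟩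
    have hAnz : ∀ i : Fin n, n - s ≤ (i : ℕ) → A i ≠ 0 := by
      intro i hi
      have hA_eq : A = b⁻¹ * (b * A) := by
        rw [← Matrix.mul_assoc, hbinv_mul, Matrix.one_mul]
      rw [hA_eq]
      exact rowNeZero (diagNe hbiU hbiT) hind' i (hnz' i hi)
    refine ⟨hAnz, ?_⟩
    have hAzero : ∀ i : Fin n, (i : ℕ) < n - s → A i = 0 := zeroOfLt hsn hAcard hAnz
    intro i j hi hj
    have h0 : ∑ k, b i k • A k = 0 := by
      rw [← mulRow]; exact hBAzero i hi
    exact keycomb hAind (fun k => b i k) h0 j (hAnz j hj)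
  · rintro ⟨hAnz, hblock⟩
    have hAzero : ∀ i : Fin n, (i : ℕ) < n - s → A i = 0 := zeroOfLt hsn hAcard hAnz
    have hnz' : ∀ i : Fin n, n - s ≤ (i : ℕ) → (b * A) i ≠ 0 := fun i hi =>
      rowNeZero (diagNe hbU hbT) hAind i (hAnz i hi)
    have hBAzero : ∀ i : Fin n, (i : ℕ) < n - s → (b * A) i = 0 := by
      intro i hi
      rw [mulRow]
      apply Finset.sum_eq_zero
      intro j _
      by_cases hj : (j : ℕ) < n - s
      · rw [hAzero j hj, smul_zero]
      · rw [hblock i j hi (by omega), zero_smul]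
    have hker' : LinearMap.ker (b * A).mulVecLin = V := by
      have hli : Function.LeftInverse b⁻¹.mulVecLin b.mulVecLin := by
        intro v
        simp only [Matrix.mulVecLin_apply, Matrix.mulVec_mulVec, hbinv_mul, Matrix.one_mulVec]
      have hkb : LinearMap.ker (Matrix.mulVecLin b) = ⊥ := LinearMap.ker_eq_bot.mpr hli.injective
      rw [Matrix.mulVecLin_mul, LinearMap.ker_comp_of_ker_eq_bot _ hkb, hAker]
    refine ⟨hker', ?_, hnz'⟩
    rw [Fintype.linearIndependent_iff]
    intro g hg
    classical
    set c : Fin n → ZMod p := fun i => if h : (b * A) i ≠ 0 then g ⟨i, h⟩ else 0 with hc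
    have hcg : ∀ x : {i : Fin n // (b * A) i ≠ 0}, c x.1 = g x := by
      intro x
      simp only [hc, dif_pos x.2]
    have hsum : ∑ i, c i • (b * A) i = 0 := by
      have h1 : ∑ i ∈ Finset.univ.filter (fun i => (b * A) i ≠ 0), c i • (b * A) i
          = ∑ i, c i • (b * A) i := by
        apply Finset.sum_filter_of_ne
        intro x _ hx hbax
        exact hx (by rw [hbax, smul_zero])
      rw [← h1, Finset.sum_subtype (p := fun i => (b * A) i ≠ 0) (Finset.univ.filter fun i => (b * A) i ≠ 0) (by simp)
        (fun i => c i • (b * A) i)]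
      exact (Finset.sum_congr rfl fun x _ => by rw [hcg x]).trans hg
    have hswap : ∑ j, (∑ i, c i * b i j) • A j = 0 := by
      rw [← hsum]
      simp_rw [mulRow, Finset.smul_sum, smul_smul, Finset.sum_smul]
      rw [Finset.sum_comm]
    have hcoef : ∀ j : Fin n, n - s ≤ (j : ℕ) → (∑ i, c i * b i j) = 0 := by
      intro j hj
      exact keycomb hAind (fun j => ∑ i, c i * b i j) hswap j (hAnz j hj)
    have hczero_low : ∀ i : Fin n, (i : ℕ) < n - s → c i = 0 := by
      intro i hi
      simp only [hc]
      rw [dif_neg]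
      simp only [ne_eq, not_not]
      exact hBAzero i hi
    have hvec : Matrix.vecMul c b = 0 := by
      funext j
      show Matrix.vecMul c b j = 0
      simp only [Matrix.vecMul, dotProduct]
      by_cases hj : n - s ≤ (j : ℕ)
      · exact hcoef j hj
      · apply Finset.sum_eq_zero
        intro i _
        by_cases hi : (i : ℕ) < n - s
        · rw [hczero_low i hi, zero_mul]
        · rw [hbT (show id j < id i by simp only [id]; exact Fin.lt_def.mpr (by omega)),
            mul_zero]
    have hc0 : c = 0 := by
      have : Matrix.vecMul c (b * b⁻¹) = 0 := by
        rw [← Matrix.vecMul_vecMul, hvec, Matrix.zero_vecMul]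
      rwa [hmul_binv, Matrix.vecMul_one] at this
    intro x
    rw [← hcg x, hc0]
    rfl
end
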